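/- Let Δ > 1 be a real number, let e₁, …, e_i (i ≥ 2) be positive reals satisfying the Δ size invariant, and let e* be a real number with e_{i−1} < e* ≤ e_i. Then ∑_{j=1}^{i} e_j^{3/2} < (1 + Δ^{3/2} + 1/(Δ^{3/2} − 1)) · (e*)^{3/2}. -/
import Mathlib


/-- **Lemma 5 (paper), combinatorial core.** If `Δ > 1`, positive reals
`e 1, …, e i` (with `i ≥ 2`) satisfy the `Δ` size invariant, and
`e (i-1) < e* ≤ e i`, then
`∑_{j=1}^{i} (e j)^{3/2} < (1 + Δ^{3/2} + 1/(Δ^{3/2} - 1)) * (e*)^{3/2}`. -/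
theorem delta_invariant_sum_rpow (Δ : ℝ) (hΔ : 1 < Δ) (i : ℕ) (hi : 2 ≤ i)
    (e : ℕ → ℝ)
    (hpos : ∀ j, 1 ≤ j → j ≤ i → 0 < e j)
    (hinv : ∀ j, 1 ≤ j → j < i → e (j + 1) = Δ * e j)
    (estar : ℝ) (hlt : e (i - 1) < estar) (hle : estar ≤ e i) :
    ∑ j ∈ Finset.Icc 1 i, e j ^ ((3 : ℝ) / 2) <
      (1 + Δ ^ ((3 : ℝ) / 2) + 1 / (Δ ^ ((3 : ℝ) / 2) - 1)) * estar ^ ((3 : ℝ) / 2) := by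
  have hΔ0 : (0:ℝ) < Δ := lt_trans one_pos hΔ
  set D : ℝ := Δ ^ ((3:ℝ)/2) with hDdef
  have hD : 1 < D := Real.one_lt_rpow_iff_of_pos hΔ0 |>.2 (Or.inl ⟨hΔ, by norm_num⟩)
  have he1 : 0 < e 1 := hpos 1 le_rfl (by omega)
  set c : ℝ := e 1 ^ ((3:ℝ)/2) with hcdef
  have hc : 0 < c := Real.rpow_pos_of_pos he1 _
  -- closed form for e j
  have hform : ∀ j, 1 ≤ j → j ≤ i → e j = Δ ^ (j - 1) * e 1 := by
    intro j hj1 hji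
    induction j with
    | zero => omega
    | succ n ih =>
      rcases Nat.eq_or_lt_of_le hj1 with h1 | h1
      · simp [← h1]
      · have hn1 : 1 ≤ n := by omega
        have hrec := hinv n hn1 (by omega)
        rw [hrec, ih hn1 (by omega)]
        have : n + 1 - 1 = (n - 1) + 1 := by omega
        rw [this, pow_succ]
        ring
  -- rpow of e j
  have hrform : ∀ j, 1 ≤ j → j ≤ i → e j ^ ((3:ℝ)/2) = D ^ (j - 1) * c := by
    intro j hj1 hji
    rw [hform j hj1 hji,
      Real.mul_rpow (pow_nonneg hΔ0.le _) he1.le, hcdef, hDdef,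
      ← Real.rpow_natCast Δ (j-1), ← Real.rpow_natCast (Δ ^ ((3:ℝ)/2)) (j-1),
      ← Real.rpow_mul hΔ0.le, ← Real.rpow_mul hΔ0.le, mul_comm ((3:ℝ)/2) (((j-1:ℕ)):ℝ), mul_comm]
  have hsum : ∑ j ∈ Finset.Icc 1 i, e j ^ ((3:ℝ)/2) = (∑ k ∈ Finset.range i, D ^ k) * c := by
    rw [Finset.sum_mul, ← Finset.Ico_add_one_right_eq_Icc, Finset.sum_Ico_eq_sum_range]
    apply Finset.sum_congr (by simp)
    intro k hk
    simp only [Finset.mem_range] at hk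
    rw [hrform (1+k) (by omega) (by omega), show 1+k-1 = k from by omega]
  have hgeom : ∑ k ∈ Finset.range i, D ^ k = (D ^ i - 1) / (D - 1) := by
    rw [geom_sum_eq (ne_of_gt hD)]
  -- e (i-1) in closed form
  have hei1 : e (i-1) ^ ((3:ℝ)/2) = D ^ (i-2) * c := by
    rw [hrform (i-1) (by omega) (by omega), show i-1-1 = i-2 from by omega]
  have hDim : (0:ℝ) < D ^ (i-2) := pow_pos (lt_trans one_pos hD) _
  have hstar : D ^ (i-2) * c < estar ^ ((3:ℝ)/2) := by
    rw [← hei1]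
    exact Real.rpow_lt_rpow (hpos (i-1) (by omega) (by omega)).le hlt (by norm_num)
  have hfac : 0 < 1 + D + 1 / (D - 1) := by
    have := hD; have h1 : 0 < D - 1 := by linarith
    positivity
  have key : (∑ k ∈ Finset.range i, D ^ k) * c < (1 + D + 1 / (D - 1)) * (D ^ (i-2) * c) := by
    rw [hgeom]
    have hiD : D ^ i = D ^ (i-2) * D ^ 2 := by
      rw [← pow_add]; congr 1; omega
    have h1 : 0 < D - 1 := by linarith
    rw [hiD, div_mul_eq_mul_div, div_lt_iff₀ h1]
    have this2 : (1 + D + 1 / (D - 1)) * (D ^ (i - 2) * c) * (D - 1)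
        = D ^ (i-2) * D^2 * c := by field_simp; ring
    rw [this2]
    nlinarith [hc]
  calc ∑ j ∈ Finset.Icc 1 i, e j ^ ((3:ℝ)/2) = (∑ k ∈ Finset.range i, D ^ k) * c := hsum
    _ < (1 + D + 1 / (D - 1)) * (D ^ (i-2) * c) := key
    _ < (1 + D + 1 / (D - 1)) * estar ^ ((3:ℝ)/2) := by
        exact mul_lt_mul_of_pos_left hstar hfac
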